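/- Let R_k be defined by the recurrence R_0 = R_1 = 1 and R_k = \sum_{r=0}^{k-1} \sum_{l=0}^{k-1-r} R_r R_l R_{k-1-r-l} for k \ge 2. Then for all k \ge 1, R_k \le \binom{3(k-1)}{k-1}. -/

import Mathlib

namespace T3Aux

inductive T3 : Type
  | leaf : T3
  | node : T3 → T3 → T3 → T3
  deriving DecidableEq

namespace T3

def size : T3 → ℕ
  | leaf => 0
  | node a b c => size a + size b + size c + 1

def B : ℕ → Finset T3
  | 0 => {leaf}
  | n + 1 => insert leaf (((B n) ×ˢ (B n) ×ˢ (B n)).image fun p => node p.1 p.2.1 p.2.2)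

lemma mem_B : ∀ n t, size t ≤ n → t ∈ B n := by
  intro n
  induction n with
  | zero => intro t ht; cases t with
    | leaf => simp [B]
    | node a b c => simp [size] at ht
  | succ n ih =>
    intro t ht
    cases t with
    | leaf => simp [B]
    | node a b c =>
      simp only [B, Finset.mem_insert, Finset.mem_image]
      right
      refine ⟨⟨a, b, c⟩, ?_, rfl⟩
      simp only [Finset.mem_product]
      simp only [size] at ht
      exact ⟨ih a (by omega), ih b (by omega), ih c (by omega)⟩

def S (n : ℕ) : Finset T3 := (B n).filter (fun t => size t = n)

lemma mem_S {n t} : t ∈ S n ↔ size t = n := by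
  constructor
  · intro h; exact (Finset.mem_filter.mp h).2
  · intro h; exact Finset.mem_filter.mpr ⟨mem_B n t h.le, h⟩

open Finset in
lemma S_eq (n : ℕ) : S (n + 1) =
    (range (n + 1)).biUnion (fun r => (range (n + 1 - r)).biUnion (fun l =>
      ((S r) ×ˢ (S l) ×ˢ (S (n - r - l))).image fun p => node p.1 p.2.1 p.2.2)) := by
  ext t
  simp only [Finset.mem_biUnion, Finset.mem_range, Finset.mem_image, Finset.mem_product, mem_S]
  constructor
  · intro ht
    cases t with
    | leaf => simp [size] at ht
    | node a b c =>
      simp only [size] at ht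
      refine ⟨size a, by omega, size b, by omega, ⟨a, b, c⟩, ⟨rfl, rfl, ?_⟩, rfl⟩
      show size c = n - size a - size b
      omega
  · rintro ⟨r, hr, l, hl, ⟨a, b, c⟩, ⟨ha, hb, hc⟩, rfl⟩
    simp only [size]
    dsimp only at ha hb hc
    omega

open Finset in
lemma S_card (n : ℕ) : (S (n + 1)).card =
    ∑ r ∈ range (n + 1), ∑ l ∈ range (n + 1 - r),
      (S r).card * (S l).card * (S (n - r - l)).card := by
  rw [S_eq]
  rw [Finset.card_biUnion]
  · refine Finset.sum_congr rfl fun r _ => ?_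
    rw [Finset.card_biUnion]
    · refine Finset.sum_congr rfl fun l _ => ?_
      rw [Finset.card_image_of_injective _ (by rintro ⟨a, b, c⟩ ⟨a', b', c'⟩ h; simpa using h)]
      simp [Finset.card_product, mul_assoc]
    · intro l₁ _ l₂ _ hne
      simp only [Finset.disjoint_left]
      rintro t ht₁ ht₂
      simp only [Finset.mem_image, Finset.mem_product, mem_S] at ht₁ ht₂
      obtain ⟨⟨a, b, c⟩, ⟨_, hb, _⟩, rfl⟩ := ht₁
      obtain ⟨⟨a', b', c'⟩, ⟨_, hb', _⟩, heq⟩ := ht₂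
      apply hne
      cases heq
      omega
  · intro r₁ _ r₂ _ hne
    simp only [Finset.disjoint_left]
    rintro t ht₁ ht₂
    simp only [Finset.mem_biUnion, Finset.mem_image, Finset.mem_product, mem_S] at ht₁ ht₂
    obtain ⟨l, _, ⟨a, b, c⟩, ⟨ha, _, _⟩, rfl⟩ := ht₁
    obtain ⟨l', _, ⟨a', b', c'⟩, ⟨ha', _, _⟩, heq⟩ := ht₂
    apply hne
    cases heq
    omega

def code : T3 → List Bool
  | leaf => [false]
  | node a b c => true :: (code a ++ code b ++ code c)

lemma length_code : ∀ t, (code t).length = 3 * size t + 1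
  | leaf => rfl
  | node a b c => by
    simp [code, size, length_code a, length_code b, length_code c]; ring

lemma count_code : ∀ t, (code t).count true = size t
  | leaf => rfl
  | node a b c => by
    simp [code, size, List.count_cons, List.count_append,
      count_code a, count_code b, count_code c]
    ring

lemma code_inj_aux : ∀ s t : T3, ∀ l l' : List Bool,
    code s ++ l = code t ++ l' → s = t ∧ l = l' := by
  intro s
  induction s with
  | leaf =>
    intro t l l' h
    cases t with
    | leaf => simpa [code] using h
    | node a b c => simp [code] at h
  | node a b c iha ihb ihc =>
    intro t l l' h
    cases t with
    | leaf => simp [code] at h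
    | node a' b' c' =>
      simp only [code, List.cons_append, List.cons.injEq, List.append_assoc] at h
      obtain ⟨-, h0⟩ := h
      obtain ⟨e1, h1⟩ := iha a' _ _ h0
      obtain ⟨e2, h2⟩ := ihb b' _ _ h1
      obtain ⟨e3, h3⟩ := ihc c' _ _ h2
      subst e1; subst e2; subst e3
      exact ⟨rfl, h3⟩

lemma code_injective {s t : T3} (h : code s = code t) : s = t :=
  (code_inj_aux s t [] [] (by simpa using h)).1

lemma ends1 : ∀ t : T3, ∃ Y, code t = Y ++ [false] := by
  intro t
  induction t with
  | leaf => exact ⟨[], rfl⟩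
  | node a b c iha ihb ihc =>
    obtain ⟨Y, hY⟩ := ihc
    refine ⟨true :: (code a ++ code b ++ Y), ?_⟩
    simp [code, hY]

lemma ends2 : ∀ a b : T3, ∃ Y, code a ++ code b = Y ++ [false, false] := by
  intro a b
  induction b generalizing a with
  | leaf =>
    obtain ⟨Y, hY⟩ := ends1 a
    refine ⟨Y, ?_⟩
    simp [code, hY]
  | node a' b' c' iha' ihb' ihc' =>
    obtain ⟨Y, hY⟩ := ihc' b'
    refine ⟨code a ++ true :: (code a' ++ Y), ?_⟩
    simp only [code, List.append_assoc, List.cons_append]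
    rw [hY]

lemma ends3 : ∀ a b c : T3, ∃ Y,
    code a ++ code b ++ code c = Y ++ [false, false, false] := by
  intro a b c
  induction c generalizing a b with
  | leaf =>
    obtain ⟨Y, hY⟩ := ends2 a b
    refine ⟨Y, ?_⟩
    simp only [code, List.append_assoc]
    rw [← List.append_assoc, hY]
    simp
  | node a' b' c' iha' ihb' ihc' =>
    obtain ⟨Y, hY⟩ := ihc' a' b'
    refine ⟨code a ++ (code b ++ true :: Y), ?_⟩
    simp only [List.append_assoc] at hY
    simp only [code, List.append_assoc, List.cons_append]
    rw [hY]

lemma posCount (l : List Bool) :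
    ((Finset.range l.length).filter (fun i => l.getD i false = true)).card = l.count true := by
  induction l with
  | nil => simp
  | cons b l ih =>
    rw [Finset.card_filter] at ih ⊢
    simp only [List.length_cons]
    rw [Finset.sum_range_succ']
    simp only [List.getD_cons_succ, List.getD_cons_zero]
    rw [ih, List.count_cons]
    cases b <;> simp [add_comm]

lemma struct {j : ℕ} {t : T3} (ht : size t = j + 1) :
    ∃ Y : List Bool, code t = true :: (Y ++ [false, false, false]) ∧
      Y.length = 3 * j ∧ Y.count true = j := by
  cases t with
  | leaf => simp [size] at ht
  | node a b c =>
    obtain ⟨Y, hY⟩ := ends3 a b c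
    refine ⟨Y, ?_, ?_, ?_⟩
    · rw [code, hY]
    · have := length_code (node a b c)
      rw [code, hY, ht] at this
      simp at this
      omega
    · have := count_code (node a b c)
      rw [code, hY, ht] at this
      simp [List.count_cons, List.count_append] at this
      omega

lemma card_S_le (j : ℕ) : (S (j + 1)).card ≤ Nat.choose (3 * j) j := by
  classical
  have h := Finset.card_le_card_of_injOn
      (s := S (j + 1))
      (f := fun t => (Finset.range (3 * j)).filter (fun i => (code t).getD (i + 1) false = true))
      (t := Finset.powersetCard j (Finset.range (3 * j))) ?_ ?_
  · rwa [Finset.card_powersetCard, Finset.card_range] at h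
  · -- maps into powersetCard
    intro t ht
    obtain ⟨Y, hc, hlen, hcnt⟩ := struct (mem_S.mp ht)
    rw [Finset.mem_coe, Finset.mem_powersetCard]
    constructor
    · exact Finset.filter_subset _ _
    · have : ∀ i, i < 3 * j → ((code t).getD (i + 1) false = Y.getD i false) := by
        intro i hi
        rw [hc, List.getD_cons_succ, List.getD_append _ _ _ _ (by omega)]
      show (Finset.filter (fun i => (code t).getD (i + 1) false = true)
        (Finset.range (3 * j))).card = j
      rw [show (Finset.range (3 * j)).filter (fun i => (code t).getD (i + 1) false = true)
            = (Finset.range (3 * j)).filter (fun i => Y.getD i false = true) from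
          Finset.filter_congr (fun i hi => by
            rw [this i (Finset.mem_range.mp hi)])]
      have := posCount Y
      rw [hlen] at this
      rw [this, hcnt]
  · -- injective
    intro s hs t ht hfeq
    obtain ⟨Ys, hcs, hlens, _⟩ := struct (mem_S.mp hs)
    obtain ⟨Yt, hct, hlent, _⟩ := struct (mem_S.mp ht)
    have hY : Ys = Yt := by
      apply List.ext_getElem (by omega)
      intro i h1 h2
      have hi : i < 3 * j := by omega
      have hmem := Finset.ext_iff.mp hfeq i
      simp only [Finset.mem_filter, Finset.mem_range] at hmem
      have es : (code s).getD (i + 1) false = Ys.getD i false := by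
        rw [hcs, List.getD_cons_succ, List.getD_append _ _ _ _ (by omega)]
      have et : (code t).getD (i + 1) false = Yt.getD i false := by
        rw [hct, List.getD_cons_succ, List.getD_append _ _ _ _ (by omega)]
      have hds : Ys.getD i false = Ys[i] := List.getD_eq_getElem _ _ h1
      have hdt : Yt.getD i false = Yt[i] := List.getD_eq_getElem _ _ h2
      rw [es, hds] at hmem
      rw [et, hdt] at hmem
      rcases Bool.eq_false_or_eq_true Ys[i] with h | h <;>
        rcases Bool.eq_false_or_eq_true Yt[i] with h' | h' <;>
        simp_all
    apply code_injective
    rw [hcs, hct, hY]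

lemma S_zero : S 0 = {leaf} := by
  ext t
  rw [mem_S]
  cases t <;> simp [size]

end T3

end T3Aux

theorem stmt_0 (R : ℕ → ℕ) (h0 : R 0 = 1) (h1 : R 1 = 1)
    (hrec : ∀ k, 2 ≤ k →
      R k = ∑ r ∈ Finset.range k, ∑ l ∈ Finset.range (k - r),
        R r * R l * R (k - 1 - r - l)) :
    ∀ k, 1 ≤ k → R k ≤ Nat.choose (3 * (k - 1)) (k - 1) := by
  open T3Aux T3Aux.T3 in
  have hR : ∀ k, R k = (S k).card := by
    intro k
    induction k using Nat.strong_induction_on with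
    | _ k ih =>
      match k with
      | 0 => rw [h0, S_zero]; simp
      | 1 =>
        rw [h1, S_card 0]
        simp [S_zero]
      | (n + 2) =>
        rw [hrec (n + 2) (by omega)]
        have hc := S_card (n + 1)
        rw [hc]
        refine Finset.sum_congr rfl fun r hr => Finset.sum_congr rfl fun l hl => ?_
        rw [Finset.mem_range] at hr hl
        rw [ih r (by omega), ih l (by omega),
          ih (n + 2 - 1 - r - l) (by omega)]
        congr 2
  intro k hk
  obtain ⟨j, rfl⟩ : ∃ j, k = j + 1 := ⟨k - 1, by omega⟩
  rw [hR]
  have := T3Aux.T3.card_S_le j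
  simpa using this
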